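/- Let f : ℝ³×ℝ³ → ℝ be nonnegative, integrable, with |v|²f integrable and f nonzero. Then its Poisson field φ_f(x) = -(1/(4π))∫ ρ_f(y)/|x-y| dy, where ρ_f(x)=∫f(x,v)dv, satisfies: there exists C_f > 0 such that for all x ∈ ℝ³, φ_f(x) ≤ -C_f/(1+|x|). -/

import Mathlib

open MeasureTheory Real

noncomputable section

abbrev R3 := EuclideanSpace ℝ (Fin 3)

/-- Spatial density `ρ_f(x) = ∫ f(x,v) dv`. -/
def rho (f : R3 × R3 → ℝ) (x : R3) : ℝ := ∫ v, f (x, v)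

/-- Poisson field `φ_f(x) = -(1/(4π)) ∫ ρ_f(y)/|x-y| dy`. -/
def phiF (f : R3 × R3 → ℝ) (x : R3) : ℝ :=
  -(1 / (4 * π)) * ∫ y, rho f y / ‖x - y‖

/-- Membership in the energy space `E`. -/
def memE (f : R3 × R3 → ℝ) : Prop :=
  (∀ p, 0 ≤ f p) ∧ Integrable f ∧ MemLp f ⊤ volume ∧
    Integrable (fun p : R3 × R3 => ‖p.2‖ ^ 2 * f p)

section Aux

open Metric Set Filter ENNReal

/-- The Riesz-kernel unit-ball integral. -/
def Kconst : ℝ≥0∞ :=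
  ∫⁻ y : R3, ((closedBall (0:R3) 1).indicator fun y => ENNReal.ofReal ‖y‖⁻¹) y

lemma Kconst_lt_top : Kconst < ⊤ := by
  have hmeas : AEMeasurable (fun y : R3 => ‖y‖⁻¹)
      ((volume : Measure R3).restrict (closedBall 0 1)) :=
    (measurable_norm.inv).aemeasurable
  have h := lintegral_eq_lintegral_meas_le
    ((volume : Measure R3).restrict (closedBall 0 1))
    (f := fun y : R3 => ‖y‖⁻¹) (Eventually.of_forall fun y => by positivity) hmeas
  have hK : Kconst = ∫⁻ t in Ioi (0:ℝ),
      (volume : Measure R3).restrict (closedBall 0 1) {a : R3 | t ≤ ‖a‖⁻¹} := by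
    rw [Kconst, lintegral_indicator measurableSet_closedBall, h]
  rw [hK]
  have hsplit : (∫⁻ t in Ioi (0:ℝ),
      (volume : Measure R3).restrict (closedBall 0 1) {a : R3 | t ≤ ‖a‖⁻¹})
      ≤ (∫⁻ t in Ioc (0:ℝ) 1,
          (volume : Measure R3).restrict (closedBall 0 1) {a : R3 | t ≤ ‖a‖⁻¹})
        + ∫⁻ t in Ioi (1:ℝ),
          (volume : Measure R3).restrict (closedBall 0 1) {a : R3 | t ≤ ‖a‖⁻¹} :=
    le_trans (lintegral_mono_set Ioi_subset_Ioc_union_Ioi) (lintegral_union_le _ _ _)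
  refine lt_of_le_of_lt hsplit (ENNReal.add_lt_top.2 ⟨?_, ?_⟩)
  · calc (∫⁻ t in Ioc (0:ℝ) 1,
        (volume : Measure R3).restrict (closedBall 0 1) {a : R3 | t ≤ ‖a‖⁻¹})
        ≤ ∫⁻ _ in Ioc (0:ℝ) 1, (volume : Measure R3) (closedBall (0:R3) 1) := by
          refine setLIntegral_mono' measurableSet_Ioc fun t _ => ?_
          refine le_trans (measure_mono (Set.subset_univ _)) ?_
          rw [Measure.restrict_apply_univ]
      _ = (volume : Measure R3) (closedBall (0:R3) 1) * volume (Ioc (0:ℝ) 1) := by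
          rw [lintegral_const, Measure.restrict_apply_univ]
      _ < ⊤ := ENNReal.mul_lt_top measure_closedBall_lt_top (by simp)
  · have hbound : ∀ t ∈ Ioi (1:ℝ),
        (volume : Measure R3).restrict (closedBall 0 1) {a : R3 | t ≤ ‖a‖⁻¹}
          ≤ ENNReal.ofReal (t ^ (-3:ℝ)) * (volume : Measure R3) (ball 0 1) := by
      intro t ht
      have ht0 : (0:ℝ) < t := lt_trans one_pos ht
      have hsub : {a : R3 | t ≤ ‖a‖⁻¹} ⊆ closedBall (0:R3) t⁻¹ := by
        intro a ha
        simp only [mem_setOf_eq] at ha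
        rcases eq_or_lt_of_le (norm_nonneg a) with h0 | h0
        · simp [mem_closedBall_zero_iff, ← h0]; positivity
        · have := (le_inv_comm₀ ht0 h0).mp ha
          simpa [mem_closedBall_zero_iff] using this
      calc (volume : Measure R3).restrict (closedBall 0 1) {a : R3 | t ≤ ‖a‖⁻¹}
          ≤ (volume : Measure R3) {a : R3 | t ≤ ‖a‖⁻¹} :=
            Measure.restrict_le_self _
        _ ≤ (volume : Measure R3) (closedBall (0:R3) t⁻¹) := measure_mono hsub
        _ = ENNReal.ofReal (t⁻¹ ^ Module.finrank ℝ R3) * (volume : Measure R3) (ball 0 1) :=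
            Measure.addHaar_closedBall _ _ (by positivity)
        _ = ENNReal.ofReal (t ^ (-3:ℝ)) * (volume : Measure R3) (ball 0 1) := by
            rw [show (t:ℝ) ^ (-3:ℝ) = (t ^ (3:ℕ))⁻¹ from by
              rw [show (-3:ℝ) = -((3:ℕ):ℝ) by norm_num, Real.rpow_neg ht0.le,
                Real.rpow_natCast],
              show Module.finrank ℝ R3 = 3 from by simp, inv_pow]
    calc (∫⁻ t in Ioi (1:ℝ),
        (volume : Measure R3).restrict (closedBall 0 1) {a : R3 | t ≤ ‖a‖⁻¹})
        ≤ ∫⁻ t in Ioi (1:ℝ),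
            ENNReal.ofReal (t ^ (-3:ℝ)) * (volume : Measure R3) (ball 0 1) :=
          setLIntegral_mono' measurableSet_Ioi hbound
      _ = (∫⁻ t in Ioi (1:ℝ), ENNReal.ofReal (t ^ (-3:ℝ)))
            * (volume : Measure R3) (ball 0 1) :=
          lintegral_mul_const' _ _ measure_ball_lt_top.ne
      _ < ⊤ := by
          refine ENNReal.mul_lt_top ?_ measure_ball_lt_top
          exact (integrableOn_Ioi_rpow_of_lt (by norm_num) one_pos).setLIntegral_lt_top

lemma lintegral_riesz_ball (x : R3) {r : ℝ} (hr : 0 < r) :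
    (∫⁻ y : R3, ((closedBall x r).indicator fun y => ENNReal.ofReal ‖x - y‖⁻¹) y)
      = ENNReal.ofReal (r ^ 2) * Kconst := by
  set F : R3 → ℝ≥0∞ := (closedBall (0:R3) r).indicator fun y => ENNReal.ofReal ‖y‖⁻¹ with hF
  have hFmeas : Measurable F :=
    (Measurable.ennreal_ofReal measurable_norm.inv).indicator measurableSet_closedBall
  -- translation step
  have htrans : (∫⁻ y : R3, ((closedBall x r).indicator fun y => ENNReal.ofReal ‖x - y‖⁻¹) y)
      = ∫⁻ y : R3, F y := by
    have := (Measure.measurePreserving_sub_left (volume : Measure R3) x).lintegral_comp hFmeas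
    rw [← this]
    refine lintegral_congr fun y => ?_
    by_cases hy : y ∈ closedBall x r
    · have hy' : x - y ∈ closedBall (0:R3) r := by
        rw [mem_closedBall_zero_iff]
        rw [mem_closedBall, dist_eq_norm] at hy
        rwa [norm_sub_rev]
      rw [hF, Set.indicator_of_mem hy, Set.indicator_of_mem hy']
    · have hy' : x - y ∉ closedBall (0:R3) r := by
        intro h
        refine hy ?_
        rw [mem_closedBall_zero_iff] at h
        rw [mem_closedBall, dist_eq_norm, ← norm_sub_rev]
        exact h
      rw [hF, Set.indicator_of_notMem hy, Set.indicator_of_notMem hy']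
  rw [htrans]
  -- scaling step
  have hscale : ENNReal.ofReal |((r:ℝ) ^ Module.finrank ℝ R3)⁻¹| * ∫⁻ y : R3, F y
      = ENNReal.ofReal r⁻¹ * Kconst := by
    have hmap := Measure.map_addHaar_smul (volume : Measure R3) (ne_of_gt hr)
    have h1 : ∫⁻ y, F y ∂(Measure.map (r • ·) (volume : Measure R3))
        = ∫⁻ y : R3, F (r • y) := lintegral_map hFmeas (measurable_const_smul r)
    rw [hmap, lintegral_smul_measure] at h1
    rw [smul_eq_mul] at h1
    rw [h1]
    have h2 : ∀ y : R3, F (r • y) = ENNReal.ofReal r⁻¹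
        * ((closedBall (0:R3) 1).indicator fun y => ENNReal.ofReal ‖y‖⁻¹) y := by
      intro y
      by_cases h : y ∈ closedBall (0:R3) 1
      · have h1 : r • y ∈ closedBall (0:R3) r := by
          rw [mem_closedBall_zero_iff] at h ⊢
          rw [norm_smul, Real.norm_eq_abs, abs_of_pos hr]
          nlinarith [norm_nonneg y]
        rw [hF, Set.indicator_of_mem h1, Set.indicator_of_mem h, norm_smul,
          Real.norm_eq_abs, abs_of_pos hr, mul_inv,
          ENNReal.ofReal_mul (by positivity)]
      · have h1 : r • y ∉ closedBall (0:R3) r := by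
          intro hc
          refine h ?_
          rw [mem_closedBall_zero_iff] at hc ⊢
          rw [norm_smul, Real.norm_eq_abs, abs_of_pos hr] at hc
          nlinarith [norm_nonneg y]
        rw [hF, Set.indicator_of_notMem h1, Set.indicator_of_notMem h, mul_zero]
    rw [funext h2, lintegral_const_mul' _ _ ENNReal.ofReal_ne_top]
    rfl
  have hfr : Module.finrank ℝ R3 = 3 := by simp
  rw [hfr] at hscale
  have habs : |((r:ℝ) ^ 3)⁻¹| = (r ^ 3)⁻¹ := abs_of_pos (by positivity)
  rw [habs] at hscale
  have hone : ENNReal.ofReal (r ^ 3) * ENNReal.ofReal ((r ^ 3)⁻¹) = 1 := by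
    rw [← ENNReal.ofReal_mul (by positivity), mul_inv_cancel₀ (by positivity)]
    exact ENNReal.ofReal_one
  calc (∫⁻ y : R3, F y) = (ENNReal.ofReal (r ^ 3) * ENNReal.ofReal ((r ^ 3)⁻¹))
        * ∫⁻ y : R3, F y := by rw [hone, one_mul]
    _ = ENNReal.ofReal (r ^ 3) * (ENNReal.ofReal ((r ^ 3)⁻¹) * ∫⁻ y : R3, F y) := by
        rw [mul_assoc]
    _ = ENNReal.ofReal (r ^ 3) * (ENNReal.ofReal r⁻¹ * Kconst) := by rw [hscale]
    _ = ENNReal.ofReal (r ^ 2) * Kconst := by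
        rw [← mul_assoc, ← ENNReal.ofReal_mul (by positivity)]
        congr 2
        field_simp

lemma integrable_kernel (f : R3 × R3 → ℝ) (hf : memE f) (x : R3) :
    Integrable (fun p : R3 × R3 => f p / ‖x - p.1‖) := by
  obtain ⟨hpos, hint, hbdd, hkin⟩ := hf
  set M := (eLpNormEssSup f volume).toReal with hMdef
  have hMtop : eLpNormEssSup f volume ≠ ⊤ := by
    have := hbdd.2
    rwa [eLpNorm_exponent_top, lt_top_iff_ne_top] at this
  have hM0 : 0 ≤ M := ENNReal.toReal_nonneg
  have hM : ∀ᵐ p : R3 × R3, f p ≤ M := by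
    filter_upwards [ae_le_eLpNormEssSup (f := f) (μ := volume)] with p hp
    have h1 : ‖f p‖ ≤ M := by
      have := ENNReal.toReal_mono hMtop hp
      simpa using this
    exact (le_abs_self _).trans (by rwa [← Real.norm_eq_abs])
  have hcont : Continuous fun p : R3 × R3 => ‖x - p.1‖ :=
    (continuous_const.sub continuous_fst).norm
  have hAESM : AEStronglyMeasurable (fun p : R3 × R3 => f p / ‖x - p.1‖) volume :=
    (hint.aemeasurable.div hcont.aemeasurable).aestronglyMeasurable
  refine ⟨hAESM, ?_⟩
  set S : Set (R3 × R3) := {p | ‖x - p.1‖ ≤ ((1 + ‖p.2‖) ^ 2)⁻¹} with hSdef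
  have hSmeas : MeasurableSet S := by
    have h1 : Continuous fun p : R3 × R3 => ((1 + ‖p.2‖) ^ 2)⁻¹ :=
      Continuous.inv₀ (by continuity) fun p => by positivity
    exact measurableSet_le hcont.measurable h1.measurable
  set k : R3 × R3 → ℝ≥0∞ := S.indicator fun p => ENNReal.ofReal ‖x - p.1‖⁻¹ with hkdef
  have hkmeas : Measurable k :=
    (Measurable.ennreal_ofReal hcont.measurable.inv).indicator hSmeas
  have hI2 : Integrable (fun p : R3 × R3 => 2 * (f p + ‖p.2‖ ^ 2 * f p)) volume :=
    (hint.add hkin).const_mul 2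
  have hbound : ∀ᵐ p : R3 × R3, (‖f p / ‖x - p.1‖‖₊ : ℝ≥0∞)
      ≤ ENNReal.ofReal M * k p + ENNReal.ofReal (2 * (f p + ‖p.2‖ ^ 2 * f p)) := by
    filter_upwards [hM] with p hMp
    have h0 : 0 ≤ f p := hpos p
    rw [show ((‖f p / ‖x - p.1‖‖₊ : ℝ≥0∞)) = ENNReal.ofReal (f p / ‖x - p.1‖) from
      Real.enorm_eq_ofReal (div_nonneg h0 (norm_nonneg _))]
    by_cases hS : p ∈ S
    · refine le_trans ?_ le_self_add
      rw [hkdef, Set.indicator_of_mem hS, ← ENNReal.ofReal_mul hM0]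
      refine ENNReal.ofReal_le_ofReal ?_
      rw [div_eq_mul_inv]
      exact mul_le_mul_of_nonneg_right hMp (by positivity)
    · refine le_trans ?_ le_add_self
      refine ENNReal.ofReal_le_ofReal ?_
      have hgt : ((1 + ‖p.2‖) ^ 2)⁻¹ < ‖x - p.1‖ := not_le.mp hS
      have hpos2 : (0:ℝ) < ((1 + ‖p.2‖) ^ 2)⁻¹ := by positivity
      have h1 : ‖x - p.1‖⁻¹ ≤ (1 + ‖p.2‖) ^ 2 := by
        have := inv_anti₀ hpos2 hgt.le
        rwa [inv_inv] at this
      rw [div_eq_mul_inv]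
      have h2 : f p * ‖x - p.1‖⁻¹ ≤ f p * (1 + ‖p.2‖) ^ 2 :=
        mul_le_mul_of_nonneg_left h1 h0
      nlinarith [mul_nonneg h0 (sq_nonneg (1 - ‖p.2‖)), norm_nonneg p.2]
  rw [HasFiniteIntegral]
  have hv4 : (∫⁻ v : R3, ENNReal.ofReal ((((1 + ‖v‖) ^ 2)⁻¹) ^ 2)) < ⊤ := by
    have h4 := finite_integral_one_add_norm (E := R3) (μ := volume) (r := 4)
      (by rw [show Module.finrank ℝ R3 = 3 from by simp]; norm_num)
    refine lt_of_le_of_lt (le_of_eq (lintegral_congr fun v => ?_)) h4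
    congr 1
    have h0 : (0:ℝ) < 1 + ‖v‖ := by positivity
    rw [show (-4:ℝ) = -((4:ℕ):ℝ) by norm_num, Real.rpow_neg h0.le, Real.rpow_natCast,
      inv_pow, ← pow_mul]
  have hinner : ∀ v : R3, (∫⁻ y : R3, k (y, v))
      = ENNReal.ofReal ((((1 + ‖v‖) ^ 2)⁻¹) ^ 2) * Kconst := by
    intro v
    have hrv : (0:ℝ) < ((1 + ‖v‖) ^ 2)⁻¹ := by positivity
    rw [← lintegral_riesz_ball x hrv]
    refine lintegral_congr fun y => ?_
    by_cases hy : y ∈ Metric.closedBall x (((1 + ‖v‖) ^ 2)⁻¹)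
    · have hS : (y, v) ∈ S := by
        rw [hSdef]
        simp only [Set.mem_setOf_eq]
        rw [Metric.mem_closedBall, dist_eq_norm] at hy
        rwa [norm_sub_rev]
      rw [hkdef, Set.indicator_of_mem hS, Set.indicator_of_mem hy]
    · have hS : (y, v) ∉ S := by
        intro hc
        refine hy ?_
        rw [hSdef] at hc
        simp only [Set.mem_setOf_eq] at hc
        rw [Metric.mem_closedBall, dist_eq_norm, ← norm_sub_rev x y]
        exact hc
      rw [hkdef, Set.indicator_of_notMem hS, Set.indicator_of_notMem hy]
  have hk' : (∫⁻ p, k p ∂volume) < ⊤ := by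
    rw [Measure.volume_eq_prod, lintegral_prod_symm _ hkmeas.aemeasurable]
    calc (∫⁻ v : R3, ∫⁻ y : R3, k (y, v))
        = (∫⁻ v : R3, ENNReal.ofReal ((((1 + ‖v‖) ^ 2)⁻¹) ^ 2)) * Kconst := by
          rw [← lintegral_mul_const' Kconst _ Kconst_lt_top.ne]
          exact lintegral_congr hinner
      _ < ⊤ := ENNReal.mul_lt_top hv4 Kconst_lt_top
  calc ∫⁻ p, ‖f p / ‖x - p.1‖‖₊ ∂volume
      ≤ ∫⁻ p, (ENNReal.ofReal M * k p
          + ENNReal.ofReal (2 * (f p + ‖p.2‖ ^ 2 * f p))) ∂volume :=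
        lintegral_mono_ae hbound
    _ = ENNReal.ofReal M * ∫⁻ p, k p ∂volume
          + ∫⁻ p, ENNReal.ofReal (2 * (f p + ‖p.2‖ ^ 2 * f p)) ∂volume := by
        rw [lintegral_add_left (hkmeas.const_mul _),
          lintegral_const_mul' _ _ ENNReal.ofReal_ne_top]
    _ < ⊤ := by
        refine ENNReal.add_lt_top.2 ⟨ENNReal.mul_lt_top ENNReal.ofReal_lt_top hk', ?_⟩
        exact lt_of_le_of_lt (lintegral_mono fun p => Real.ofReal_le_enorm _) hI2.2

end Aux

section Main

open Metric Set Filter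

theorem poisson_field_upper_bound (f : R3 × R3 → ℝ) (hf : memE f)
    (hne : ¬ (f =ᵐ[volume] 0)) :
    ∃ C : ℝ, 0 < C ∧ ∀ x : R3, phiF f x ≤ -C / (1 + ‖x‖) := by
  obtain ⟨hpos, hint, hbdd, hkin⟩ := hf
  have hint' : Integrable f ((volume : Measure R3).prod volume) := by
    rwa [← Measure.volume_eq_prod]
  have hρ_int : Integrable (rho f) (volume : Measure R3) := hint'.integral_prod_left
  have hρ_nonneg : ∀ y, 0 ≤ rho f y := fun y => integral_nonneg fun v => hpos _
  have hIf_pos : 0 < ∫ p, f p ∂volume := by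
    rcases (integral_nonneg (f := f) hpos).lt_or_eq with h | h
    · exact h
    · exact absurd ((integral_eq_zero_iff_of_nonneg hpos hint).mp h.symm) hne
  have hIρ : ∫ y, rho f y = ∫ p, f p ∂volume := by
    rw [Measure.volume_eq_prod]
    exact integral_integral hint'
  set I : ℝ := ∫ y, rho f y with hIdef
  have hIpos : 0 < I := hIρ ▸ hIf_pos
  have htend := tendsto_setIntegral_of_monotone (μ := (volume : Measure R3))
    (f := rho f) (s := fun n : ℕ => closedBall (0:R3) n)
    (fun n => measurableSet_closedBall)
    (fun m n hmn => closedBall_subset_closedBall (by exact_mod_cast hmn))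
    (by rw [iUnion_closedBall_nat]; exact hρ_int.integrableOn)
  rw [iUnion_closedBall_nat] at htend
  have htend' : Tendsto (fun n : ℕ => ∫ y in closedBall (0:R3) n, rho f y)
      atTop (nhds I) := by
    rwa [Measure.restrict_univ] at htend
  obtain ⟨n, hn⟩ := (htend'.eventually (eventually_gt_nhds (half_lt_self hIpos))).exists
  set R : ℝ := max 1 (n:ℝ) with hRdef
  have hR1 : (1:ℝ) ≤ R := le_max_left _ _
  have hR0 : (0:ℝ) < R := lt_of_lt_of_le one_pos hR1
  have hball : I / 2 ≤ ∫ y in closedBall (0:R3) R, rho f y := by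
    refine le_trans hn.le ?_
    exact setIntegral_mono_set hρ_int.integrableOn
      (Eventually.of_forall fun y => hρ_nonneg y)
      (HasSubset.Subset.eventuallyLE (closedBall_subset_closedBall (le_max_right _ _)))
  have hπ : (3:ℝ) < π := pi_gt_three
  refine ⟨I / (8 * π * R) / (4 * π), by positivity, fun x => ?_⟩
  have hker := integrable_kernel f ⟨hpos, hint, hbdd, hkin⟩ x
  have hgx : Integrable (fun y => rho f y / ‖x - y‖) (volume : Measure R3) := by
    have h2 : Integrable (fun y : R3 => ∫ v, f (y, v) / ‖x - y‖) volume := by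
      rw [Measure.volume_eq_prod] at hker
      exact hker.integral_prod_left
    have heq : (fun y : R3 => ∫ v, f (y, v) / ‖x - y‖) = fun y => rho f y / ‖x - y‖ := by
      funext y
      rw [rho, integral_div]
    rwa [heq] at h2
  have hgx_nonneg : ∀ y, 0 ≤ rho f y / ‖x - y‖ :=
    fun y => div_nonneg (hρ_nonneg y) (norm_nonneg _)
  have step1 : ∫ y in closedBall (0:R3) R, rho f y / ‖x - y‖
      ≤ ∫ y, rho f y / ‖x - y‖ :=
    setIntegral_le_integral hgx (Eventually.of_forall hgx_nonneg)
  have hx_ne : ∀ᵐ y : R3, y ≠ x := by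
    have hsing : {y : R3 | ¬ y ≠ x} = {x} := by ext y; simp
    rw [ae_iff, hsing]
    exact measure_singleton x
  have hxR : (0:ℝ) < ‖x‖ + R := by positivity
  have step2 : (∫ y in closedBall (0:R3) R, rho f y) / (‖x‖ + R)
      ≤ ∫ y in closedBall (0:R3) R, rho f y / ‖x - y‖ := by
    rw [← integral_div]
    refine setIntegral_mono_ae_restrict ((hρ_int.div_const _).integrableOn)
      hgx.integrableOn ?_
    filter_upwards [ae_restrict_mem measurableSet_closedBall, ae_restrict_of_ae hx_ne]
      with y hy hyx
    have h1 : 0 < ‖x - y‖ := by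
      rw [norm_sub_pos_iff]
      exact fun h => hyx h.symm
    have h2 : ‖x - y‖ ≤ ‖x‖ + R := by
      refine (norm_sub_le x y).trans ?_
      have hyR : ‖y‖ ≤ R := mem_closedBall_zero_iff.mp hy
      linarith
    gcongr
    exact hρ_nonneg y
  have step3 : I / 2 / (‖x‖ + R) ≤ (∫ y in closedBall (0:R3) R, rho f y) / (‖x‖ + R) := by
    gcongr
  have hJ : I / 2 / (‖x‖ + R) ≤ ∫ y, rho f y / ‖x - y‖ :=
    step3.trans (step2.trans step1)
  have key : I / (8 * π * R) / (4 * π) / (1 + ‖x‖) ≤ 1 / (4 * π) * (I / 2 / (‖x‖ + R)) := by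
    have hx0 : (0:ℝ) ≤ ‖x‖ := norm_nonneg x
    rw [div_div, div_div, one_div_mul_eq_div, div_div, div_div]
    rw [div_le_div_iff_of_pos_left hIpos (by positivity) (by positivity)]
    nlinarith [mul_pos pi_pos hR0, mul_nonneg (mul_pos pi_pos hR0).le hx0,
      mul_le_mul_of_nonneg_right hR1 hx0, mul_nonneg hx0 hR0.le, pi_pos]
  rw [phiF, show -(I / (8 * π * R) / (4 * π)) / (1 + ‖x‖)
      = -(I / (8 * π * R) / (4 * π) / (1 + ‖x‖)) from neg_div _ _, neg_mul, neg_le_neg_iff]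
  refine le_trans key ?_
  exact mul_le_mul_of_nonneg_left hJ (by positivity)

end Main
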